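/- Let n ≥ 1 and let C ∈ ℝ^{n×n} with C_{ij} ≥ 0 for all i,j and min_{i,j} C_{ij} = 0, and let μ, ν ∈ ℝ^n be probability vectors (nonnegative entries summing to 1). Then there exist vectors u*, v* ∈ ℝ^n such that u*_i + v*_j ≤ C_{ij} for all i,j, such that ⟨u*, μ⟩ + ⟨v*, ν⟩ equals the optimal value min{⟨C, X⟩ : X ∈ ℝ^{n×n}, X_{ij} ≥ 0, X𝟙 = μ, Xᵀ𝟙 = ν} of the discrete optimal transport problem, and such that max_i |u*_i| ≤ ‖C‖/2 and max_j |v*_j| ≤ ‖C‖/2, where ‖C‖ := max_{i,j} C_{ij}. -/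

import Mathlib

open Finset

/-- Weight of a walk starting at `x` through the list `t`. -/
def pathW {n : ℕ} (w : Fin n → Fin n → ℝ) : Fin n → List (Fin n) → ℝ
  | _, [] => 0
  | x, y :: t => w x y + pathW w y t

@[simp] lemma pathW_nil {n : ℕ} (w : Fin n → Fin n → ℝ) (x : Fin n) : pathW w x [] = 0 := rfl
@[simp] lemma pathW_cons {n : ℕ} (w : Fin n → Fin n → ℝ) (x y : Fin n) (t : List (Fin n)) :
    pathW w x (y :: t) = w x y + pathW w y t := rfl

/-- Expand a walk for the shortcut weight into a walk for original weight via `a`. -/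
noncomputable def expandW {n : ℕ} (w : Fin n → Fin n → ℝ) (a : Fin n)
    (t : List (Fin n)) : Fin n → List (Fin n) :=
  match t with
  | [] => fun _ => []
  | y :: t => fun x => (if w x y ≤ w x a + w a y then [y] else [a, y]) ++ expandW w a t y

@[simp] lemma expandW_nil {n : ℕ} (w : Fin n → Fin n → ℝ) (a x : Fin n) :
    expandW w a [] x = [] := rfl
lemma expandW_cons {n : ℕ} (w : Fin n → Fin n → ℝ) (a x y : Fin n) (t : List (Fin n)) :
    expandW w a (y :: t) x
      = (if w x y ≤ w x a + w a y then [y] else [a, y]) ++ expandW w a t y := rfl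

lemma expandW_path_le {n : ℕ} (w : Fin n → Fin n → ℝ) (a : Fin n) :
    ∀ (t : List (Fin n)) (x : Fin n),
      pathW w x (expandW w a t x) ≤ pathW (fun p r => min (w p r) (w p a + w a r)) x t := by
  intro t
  induction t with
  | nil => intro x; simp
  | cons y t ih =>
    intro x
    rw [expandW_cons]
    by_cases h : w x y ≤ w x a + w a y
    · rw [if_pos h]
      simp only [List.singleton_append, pathW_cons]
      have := ih y
      have hmin : min (w x y) (w x a + w a y) = w x y := min_eq_left h
      simp only [hmin]
      linarith
    · rw [if_neg h]
      simp only [List.cons_append, List.singleton_append, pathW_cons]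
      have := ih y
      have hmin : min (w x y) (w x a + w a y) = w x a + w a y := min_eq_right (le_of_not_ge h)
      simp only [hmin, List.nil_append]
      linarith

lemma expandW_mem {n : ℕ} (w : Fin n → Fin n → ℝ) (a : Fin n) :
    ∀ (t : List (Fin n)) (x z : Fin n), z ∈ expandW w a t x → z = a ∨ z ∈ t := by
  intro t
  induction t with
  | nil => intro x z hz; simp at hz
  | cons y t ih =>
    intro x z hz
    rw [expandW_cons] at hz
    simp only [List.mem_append] at hz
    rcases hz with hz | hz
    · split at hz <;> simp at hz <;>
        first
          | (subst hz; exact Or.inr List.mem_cons_self)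
          | (rcases hz with hz | hz
             · exact Or.inl hz
             · subst hz; exact Or.inr List.mem_cons_self)
    · rcases ih y z hz with h | h
      · exact Or.inl h
      · exact Or.inr (List.mem_cons_of_mem _ h)

lemma expandW_last {n : ℕ} (w : Fin n → Fin n → ℝ) (a : Fin n) :
    ∀ (t : List (Fin n)) (x y : Fin n), ∃ l', expandW w a (t ++ [y]) x = l' ++ [y] := by
  intro t
  induction t with
  | nil =>
    intro x y
    by_cases h : w x y ≤ w x a + w a y
    · exact ⟨[], by simp [List.nil_append, expandW_cons, if_pos h]⟩
    · exact ⟨[a], by simp [List.nil_append, expandW_cons, if_neg h]⟩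
  | cons z t ih =>
    intro x y
    obtain ⟨l', hl'⟩ := ih z y
    refine ⟨(if w x z ≤ w x a + w a z then [z] else [a, z]) ++ l', ?_⟩
    rw [List.cons_append, expandW_cons, hl', List.append_assoc]

/-- Existence of shortest-path potentials on a finite vertex set when every
closed walk has nonnegative weight. -/
lemma potential_exists {n : ℕ} (V : Finset (Fin n)) (w : Fin n → Fin n → ℝ)
    (H : ∀ x ∈ V, ∀ l : List (Fin n), (∀ y ∈ l, y ∈ V) → 0 ≤ pathW w x (l ++ [x])) :
    ∃ v : Fin n → ℝ, ∀ x ∈ V, ∀ y ∈ V, v y ≤ v x + w x y := by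
  classical
  induction V using Finset.induction generalizing w with
  | empty => exact ⟨fun _ => 0, by simp⟩
  | @insert a s ha ih =>
    -- self-loop at a is nonnegative
    have haa : 0 ≤ w a a := by
      have := H a (mem_insert_self a s) [] (by simp)
      simpa using this
    set w' : Fin n → Fin n → ℝ := fun p r => min (w p r) (w p a + w a r) with hw'
    have H' : ∀ x ∈ s, ∀ l : List (Fin n), (∀ y ∈ l, y ∈ s) → 0 ≤ pathW w' x (l ++ [x]) := by
      intro x hx l hl
      obtain ⟨l', hl'⟩ := expandW_last w a l x x
      have hmem : ∀ z ∈ l', z ∈ insert a s := by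
        intro z hz
        have hz2 : z ∈ expandW w a (l ++ [x]) x := by
          rw [hl']; exact List.mem_append_left _ hz
        rcases expandW_mem w a (l ++ [x]) x z hz2 with h | h
        · exact h ▸ mem_insert_self a s
        · rcases List.mem_append.mp h with h | h
          · exact mem_insert_of_mem (hl z h)
          · simp at h; exact h ▸ mem_insert_of_mem hx
      have h0 : 0 ≤ pathW w x (l' ++ [x]) := H x (mem_insert_of_mem hx) l' hmem
      calc (0:ℝ) ≤ pathW w x (l' ++ [x]) := h0
        _ = pathW w x (expandW w a (l ++ [x]) x) := by rw [hl']
        _ ≤ pathW w' x (l ++ [x]) := expandW_path_le w a _ x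
    obtain ⟨v', hv'⟩ := ih w' H'
    by_cases hs : s.Nonempty
    · set va : ℝ := s.inf' hs (fun x => v' x + w x a) with hva
      refine ⟨fun y => if y = a then va else v' y, ?_⟩
      intro x hx y hy
      by_cases hxa : x = a <;> by_cases hya : y = a
      · subst hxa; subst hya; simp; linarith
      · -- x = a, y ∈ s
        subst hxa
        have hy' : y ∈ s := (mem_insert.mp hy).resolve_left hya
        obtain ⟨x0, hx0, hval⟩ := Finset.exists_mem_eq_inf' hs (fun z => v' z + w z x)
        have h1 : v' y ≤ v' x0 + w' x0 y := hv' x0 hx0 y hy'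
        have h2 : w' x0 y ≤ w x0 x + w x y := min_le_right _ _
        simp only [eq_self_iff_true, if_true, if_neg hya]
        rw [hva, hval]
        linarith
      · -- x ∈ s, y = a
        subst hya
        have hx' : x ∈ s := (mem_insert.mp hx).resolve_left hxa
        simp only [eq_self_iff_true, if_true, if_neg hxa]
        exact hva ▸ Finset.inf'_le _ hx'
      · have hx' : x ∈ s := (mem_insert.mp hx).resolve_left hxa
        have hy' : y ∈ s := (mem_insert.mp hy).resolve_left hya
        simp only [if_neg hya, if_neg hxa]
        exact le_trans (hv' x hx' y hy') (by have : w' x y ≤ w x y := min_le_left _ _; linarith)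
    · refine ⟨fun _ => 0, ?_⟩
      intro x hx y hy
      rcases mem_insert.mp hx with rfl | hx
      · rcases mem_insert.mp hy with rfl | hy
        · simpa using haa
        · exact absurd hy (by simp [Finset.not_nonempty_iff_eq_empty.mp hs])
      · exact absurd hx (by simp [Finset.not_nonempty_iff_eq_empty.mp hs])

lemma pathW_eq_sum {n : ℕ} (w : Fin n → Fin n → ℝ) :
    ∀ (t : List (Fin n)) (x d : Fin n),
      pathW w x t = ∑ m ∈ Finset.range t.length,
        w ((x :: t).getD m d) ((x :: t).getD (m+1) d) := by
  intro t
  induction t with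
  | nil => intro x d; simp
  | cons y t ih =>
    intro x d
    rw [pathW_cons, ih y d]
    rw [List.length_cons, Finset.sum_range_succ']
    simp [List.getD_cons_succ, List.getD_cons_zero]
    ring

lemma pathW_cycle_eq_sum {n : ℕ} (w : Fin n → Fin n → ℝ) (x : Fin n) (l : List (Fin n)) :
    pathW w x (l ++ [x]) = ∑ m ∈ Finset.range (l.length + 1),
      w ((x :: l).getD m x) ((x :: l).getD ((m+1) % (l.length + 1)) x) := by
  rw [pathW_eq_sum w (l ++ [x]) x x]
  have hlen : (l ++ [x]).length = l.length + 1 := by simp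
  rw [hlen]
  apply Finset.sum_congr rfl
  intro m hm
  have hm' : m < l.length + 1 := Finset.mem_range.mp hm
  have h1 : (x :: (l ++ [x])).getD m x = (x :: l).getD m x := by
    have : x :: (l ++ [x]) = (x :: l) ++ [x] := by simp
    rw [this, List.getD_append _ _ _ _ (by simpa using hm')]
  rw [h1]
  congr 1
  by_cases hmk : m < l.length
  · have : x :: (l ++ [x]) = (x :: l) ++ [x] := by simp
    rw [this, List.getD_append _ _ _ _ (by simp; omega)]
    rw [Nat.mod_eq_of_lt (by omega)]
  · have hmeq : m = l.length := by omega
    subst hmeq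
    have : x :: (l ++ [x]) = (x :: l) ++ [x] := by simp
    rw [this]
    rw [Nat.mod_self]
    have h2 : ((x :: l) ++ [x]).getD (l.length + 1) x = x := by
      rw [List.getD_append_right _ _ _ _ (by simp)]
      simp
    rw [h2]
    simp
open Finset

lemma collapse_sum {n : ℕ} (f : Fin n → Fin n → ℝ) (a b : Fin n) :
    ∑ i, ∑ j, (if a = i ∧ b = j then f i j else 0) = f a b := by
  simp [ite_and, Finset.sum_ite_eq]

lemma collapse_row {n : ℕ} (a b : Fin n) (i : Fin n) :
    ∑ j, (if a = i ∧ b = j then (1:ℝ) else 0) = if a = i then (1:ℝ) else 0 := by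
  simp [ite_and, Finset.sum_ite_eq]

lemma cyc_mono {n : ℕ} (C : Matrix (Fin n) (Fin n) ℝ) (μ ν : Fin n → ℝ) (opt : ℝ)
    (hopt : IsLeast {t : ℝ | ∃ X : Matrix (Fin n) (Fin n) ℝ,
      (∀ i j, 0 ≤ X i j) ∧ (∀ i, ∑ j, X i j = μ i) ∧ (∀ j, ∑ i, X i j = ν j) ∧
      ∑ i, ∑ j, C i j * X i j = t} opt)
    (X : Matrix (Fin n) (Fin n) ℝ)
    (hX0 : ∀ i j, 0 ≤ X i j) (hXr : ∀ i, ∑ j, X i j = μ i) (hXc : ∀ j, ∑ i, X i j = ν j)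
    (hXv : ∑ i, ∑ j, C i j * X i j = opt)
    (k : ℕ) (p q : Fin (k+1) → Fin n) (hpq : ∀ m, 0 < X (p m) (q m)) :
    ∑ m, C (p m) (q m) ≤ ∑ m, C (p m) (q (m+1)) := by
  classical
  set δ : ℝ := univ.inf' ⟨0, mem_univ 0⟩ (fun m : Fin (k+1) => X (p m) (q m)) with hδ
  have hδpos : 0 < δ := by
    rw [hδ]; refine (Finset.lt_inf'_iff _).2 ?_
    intro m _; exact hpq m
  set ε : ℝ := δ / (k+1) with hε
  have hεpos : 0 < ε := by positivity
  set A : Fin n → Fin n → ℝ :=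
    fun i j => ∑ m : Fin (k+1), (if p m = i ∧ q (m+1) = j then (1:ℝ) else 0) with hA
  set B : Fin n → Fin n → ℝ :=
    fun i j => ∑ m : Fin (k+1), (if p m = i ∧ q m = j then (1:ℝ) else 0) with hB
  set Y : Matrix (Fin n) (Fin n) ℝ := fun i j => X i j + ε * (A i j - B i j) with hY
  have hA0 : ∀ i j, 0 ≤ A i j := by
    intro i j; apply Finset.sum_nonneg; intro m _; positivity
  have hB0 : ∀ i j, 0 ≤ B i j := by
    intro i j; apply Finset.sum_nonneg; intro m _; positivity
  -- nonnegativity of Y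
  have hY0 : ∀ i j, 0 ≤ Y i j := by
    intro i j
    by_cases hex : ∃ m, p m = i ∧ q m = j
    · obtain ⟨m, hm1, hm2⟩ := hex
      have hXδ : δ ≤ X i j := by
        rw [hδ]
        have := Finset.inf'_le (fun m : Fin (k+1) => X (p m) (q m)) (mem_univ m)
        rwa [hm1, hm2] at this
      have hBle : B i j ≤ (k+1 : ℝ) := by
        rw [hB]
        calc ∑ m : Fin (k+1), (if p m = i ∧ q m = j then (1:ℝ) else 0)
            ≤ ∑ _m : Fin (k+1), (1:ℝ) := by
              apply Finset.sum_le_sum; intro m _; split <;> norm_num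
          _ = (k+1 : ℝ) := by simp
      have hεB : ε * B i j ≤ δ := by
        calc ε * B i j ≤ ε * (k+1 : ℝ) := by nlinarith
          _ = δ := by rw [hε]; field_simp
      have : 0 ≤ ε * A i j := by positivity
      simp only [hY]
      nlinarith
    · push_neg at hex
      have hBz : B i j = 0 := by
        rw [hB]; apply Finset.sum_eq_zero; intro m _
        rw [if_neg]; intro ⟨h1, h2⟩; exact (hex m h1) h2
      have : 0 ≤ ε * A i j := by positivity
      simp only [hY, hBz]
      have := hX0 i j
      nlinarith
  -- row sums
  have hYr : ∀ i, ∑ j, Y i j = μ i := by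
    intro i
    simp only [hY]
    rw [Finset.sum_add_distrib, hXr i, ← Finset.mul_sum]
    have : ∑ j, (A i j - B i j) = 0 := by
      rw [Finset.sum_sub_distrib]
      have hAr : ∑ j, A i j = ∑ m : Fin (k+1), (if p m = i then (1:ℝ) else 0) := by
        rw [hA]; rw [Finset.sum_comm]
        exact Finset.sum_congr rfl fun m _ => collapse_row (p m) (q (m+1)) i
      have hBr : ∑ j, B i j = ∑ m : Fin (k+1), (if p m = i then (1:ℝ) else 0) := by
        rw [hB]; rw [Finset.sum_comm]
        exact Finset.sum_congr rfl fun m _ => collapse_row (p m) (q m) i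
      rw [hAr, hBr]; ring
    rw [this]; ring
  -- column sums
  have hYc : ∀ j, ∑ i, Y i j = ν j := by
    intro j
    simp only [hY]
    rw [Finset.sum_add_distrib, hXc j, ← Finset.mul_sum]
    have : ∑ i, (A i j - B i j) = 0 := by
      rw [Finset.sum_sub_distrib]
      have hAc : ∑ i, A i j = ∑ m : Fin (k+1), (if q (m+1) = j then (1:ℝ) else 0) := by
        rw [hA]; rw [Finset.sum_comm]
        apply Finset.sum_congr rfl
        intro m _
        simp [ite_and, Finset.sum_ite_eq, and_comm]
      have hBc : ∑ i, B i j = ∑ m : Fin (k+1), (if q m = j then (1:ℝ) else 0) := by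
        rw [hB]; rw [Finset.sum_comm]
        apply Finset.sum_congr rfl
        intro m _
        simp [ite_and, Finset.sum_ite_eq, and_comm]
      rw [hAc, hBc]
      rw [← Equiv.sum_comp (Equiv.addRight (1 : Fin (k+1))) (fun m => if q m = j then (1:ℝ) else 0)]
      simp only [Equiv.coe_addRight]
      exact sub_eq_zero.mpr (Finset.sum_congr rfl fun m _ => by congr)
    rw [this]; ring
  -- value
  have hYv : ∑ i, ∑ j, C i j * Y i j
      = opt + ε * ((∑ m, C (p m) (q (m+1))) - ∑ m, C (p m) (q m)) := by
    have hCA : ∑ i, ∑ j, C i j * A i j = ∑ m, C (p m) (q (m+1)) := by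
      rw [hA]
      have : ∀ i j, C i j * (∑ m : Fin (k+1), (if p m = i ∧ q (m+1) = j then (1:ℝ) else 0))
          = ∑ m : Fin (k+1), (if p m = i ∧ q (m+1) = j then C i j else 0) := by
        intro i j; rw [Finset.mul_sum]; apply Finset.sum_congr rfl; intro m _
        split <;> ring
      simp only [this]
      rw [show ∑ i, ∑ j, ∑ m : Fin (k+1), (if p m = i ∧ q (m+1) = j then C i j else 0)
          = ∑ m : Fin (k+1), ∑ i, ∑ j, (if p m = i ∧ q (m+1) = j then C i j else 0) by
        rw [show (∑ i, ∑ j, ∑ m : Fin (k+1), (if p m = i ∧ q (m+1) = j then C i j else 0))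
            = ∑ i, ∑ m : Fin (k+1), ∑ j, (if p m = i ∧ q (m+1) = j then C i j else 0) from
          Finset.sum_congr rfl fun i _ => Finset.sum_comm]
        exact Finset.sum_comm]
      apply Finset.sum_congr rfl
      intro m _
      exact collapse_sum C (p m) (q (m+1))
    have hCB : ∑ i, ∑ j, C i j * B i j = ∑ m, C (p m) (q m) := by
      rw [hB]
      have : ∀ i j, C i j * (∑ m : Fin (k+1), (if p m = i ∧ q m = j then (1:ℝ) else 0))
          = ∑ m : Fin (k+1), (if p m = i ∧ q m = j then C i j else 0) := by
        intro i j; rw [Finset.mul_sum]; apply Finset.sum_congr rfl; intro m _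
        split <;> ring
      simp only [this]
      rw [show ∑ i, ∑ j, ∑ m : Fin (k+1), (if p m = i ∧ q m = j then C i j else 0)
          = ∑ m : Fin (k+1), ∑ i, ∑ j, (if p m = i ∧ q m = j then C i j else 0) by
        rw [show (∑ i, ∑ j, ∑ m : Fin (k+1), (if p m = i ∧ q m = j then C i j else 0))
            = ∑ i, ∑ m : Fin (k+1), ∑ j, (if p m = i ∧ q m = j then C i j else 0) from
          Finset.sum_congr rfl fun i _ => Finset.sum_comm]
        exact Finset.sum_comm]
      apply Finset.sum_congr rfl
      intro m _
      exact collapse_sum C (p m) (q m)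
    simp only [hY]
    have expand : ∀ i j, C i j * (X i j + ε * (A i j - B i j))
        = C i j * X i j + ε * (C i j * A i j - C i j * B i j) := by intro i j; ring
    simp only [expand]
    rw [show (∑ i, ∑ j, (C i j * X i j + ε * (C i j * A i j - C i j * B i j)))
        = (∑ i, ∑ j, C i j * X i j) + ε * ((∑ i, ∑ j, C i j * A i j) - (∑ i, ∑ j, C i j * B i j)) by
      simp only [mul_sub, Finset.sum_add_distrib, Finset.sum_sub_distrib, Finset.mul_sum]]
    rw [hXv, hCA, hCB]
  have hmem : opt + ε * ((∑ m, C (p m) (q (m+1))) - ∑ m, C (p m) (q m)) ∈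
      {t : ℝ | ∃ X : Matrix (Fin n) (Fin n) ℝ,
      (∀ i j, 0 ≤ X i j) ∧ (∀ i, ∑ j, X i j = μ i) ∧ (∀ j, ∑ i, X i j = ν j) ∧
      ∑ i, ∑ j, C i j * X i j = t} := ⟨Y, hY0, hYr, hYc, hYv⟩
  have := hopt.2 hmem
  nlinarith [this]

/-- **Existence of a bounded dual optimal pair for optimal transport.**
If `C` is a nonnegative cost matrix with `min_{i,j} C i j = 0` and `μ, ν` are
probability vectors, then there is a dual feasible pair `(u, v)` whose dual value
equals the optimal transport value and whose entries are bounded by `‖C‖/2`,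
where `‖C‖ = max_{i,j} C i j`. -/
theorem dual_solution_bounded_by_half_cost
    (n : ℕ) (hn : 1 ≤ n) (C : Matrix (Fin n) (Fin n) ℝ)
    (hC : ∀ i j, 0 ≤ C i j) (hCmin : ∃ i j, C i j = 0)
    (μ ν : Fin n → ℝ) (hμ0 : ∀ i, 0 ≤ μ i) (hμ1 : ∑ i, μ i = 1)
    (hν0 : ∀ j, 0 ≤ ν j) (hν1 : ∑ j, ν j = 1)
    (Cmax : ℝ) (hCmax : IsGreatest {r : ℝ | ∃ i j, C i j = r} Cmax)
    (opt : ℝ)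
    (hopt : IsLeast {t : ℝ | ∃ X : Matrix (Fin n) (Fin n) ℝ,
      (∀ i j, 0 ≤ X i j) ∧ (∀ i, ∑ j, X i j = μ i) ∧ (∀ j, ∑ i, X i j = ν j) ∧
      ∑ i, ∑ j, C i j * X i j = t} opt) :
    ∃ u v : Fin n → ℝ,
      (∀ i j, u i + v j ≤ C i j) ∧
      (∑ i, u i * μ i) + (∑ j, v j * ν j) = opt ∧
      (∀ i, |u i| ≤ Cmax / 2) ∧ (∀ j, |v j| ≤ Cmax / 2) := by
  classical
  obtain ⟨X, hX0, hXr, hXc, hXv⟩ := hopt.1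
  have hn' : (univ : Finset (Fin n)).Nonempty := ⟨⟨0, hn⟩, mem_univ _⟩
  have hCle : ∀ i j, C i j ≤ Cmax := fun i j => hCmax.2 ⟨i, j, rfl⟩
  have hCmax0 : 0 ≤ Cmax := by
    obtain ⟨i, j, hij⟩ := hCmax.1
    exact hij ▸ hC i j
  -- the support columns
  set J : Finset (Fin n) := univ.filter (fun j => ∃ i, 0 < X i j) with hJ
  have hJne : J.Nonempty := by
    have : ∃ j, 0 < ν j := by
      by_contra h
      push_neg at h
      have : ∑ j, ν j ≤ 0 := Finset.sum_nonpos (fun j _ => h j)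
      linarith [hν1]
    obtain ⟨j, hj⟩ := this
    have : ∃ i, 0 < X i j := by
      by_contra h
      push_neg at h
      have : ∑ i, X i j ≤ 0 := Finset.sum_nonpos (fun i _ => h i)
      rw [hXc j] at this; linarith
    exact ⟨j, by simp [hJ, this]⟩
  -- the weight function on columns
  set w : Fin n → Fin n → ℝ := fun j j' =>
    if h : (univ.filter (fun i => 0 < X i j)).Nonempty then
      (univ.filter (fun i => 0 < X i j)).inf' h (fun i => C i j' - C i j)
    else 0 with hw
  have hwle : ∀ j j' i, 0 < X i j → w j j' ≤ C i j' - C i j := by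
    intro j j' i hi
    have hne : (univ.filter (fun i => 0 < X i j)).Nonempty := ⟨i, by simp [hi]⟩
    rw [hw]
    simp only [dif_pos hne]
    exact Finset.inf'_le _ (by simp [hi])
  have hwex : ∀ j ∈ J, ∀ j', ∃ i, 0 < X i j ∧ w j j' = C i j' - C i j := by
    intro j hj j'
    have hne : (univ.filter (fun i => 0 < X i j)).Nonempty := by
      rw [hJ] at hj; simp at hj
      obtain ⟨i, hi⟩ := hj
      exact ⟨i, by simp [hi]⟩
    obtain ⟨i, hi, hval⟩ := Finset.exists_mem_eq_inf' hne (fun i => C i j' - C i j)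
    refine ⟨i, by simpa using hi, ?_⟩
    rw [hw]; simp only [dif_pos hne]; exact hval
  -- the closed-walk nonnegativity hypothesis
  have Hwalk : ∀ x ∈ J, ∀ l : List (Fin n), (∀ y ∈ l, y ∈ J) → 0 ≤ pathW w x (l ++ [x]) := by
    intro x hx l hl
    rw [pathW_cycle_eq_sum]
    set k := l.length with hk
    set g : Fin (k+1) → Fin n := fun m => (x :: l).getD m.val x with hg
    have hgJ : ∀ m, g m ∈ J := by
      intro m
      show (x :: l).getD m.val x ∈ J
      by_cases h : m.val < (x :: l).length
      · rw [List.getD_eq_getElem _ _ h]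
        have := List.getElem_mem h
        rcases List.mem_cons.mp this with h' | h'
        · rw [h']; exact hx
        · exact hl _ h'
      · rw [List.getD_eq_default _ _ (le_of_not_gt h)]
        exact hx
    have hsum : ∑ m ∈ Finset.range (k + 1),
        w ((x :: l).getD m x) ((x :: l).getD ((m+1) % (k + 1)) x)
        = ∑ m : Fin (k+1), w (g m) (g (m+1)) := by
      rw [← Fin.sum_univ_eq_sum_range
        (fun m => w ((x :: l).getD m x) ((x :: l).getD ((m+1) % (k + 1)) x)) (k+1)]
      apply Finset.sum_congr rfl
      intro m _
      have hval : ((m + 1 : Fin (k+1))).val = (m.val + 1) % (k+1) := by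
        rw [Fin.add_def, Fin.val_one']
        conv_rhs => rw [Nat.add_mod, Nat.mod_eq_of_lt m.isLt]
      simp only [hg, hval]
    rw [hsum]
    have := fun m : Fin (k+1) => hwex (g m) (hgJ m) (g (m+1))
    choose p hp1 hp2 using this
    have : ∑ m : Fin (k+1), w (g m) (g (m+1))
        = (∑ m : Fin (k+1), C (p m) (g (m+1))) - ∑ m : Fin (k+1), C (p m) (g m) := by
      rw [← Finset.sum_sub_distrib]
      exact Finset.sum_congr rfl fun m _ => hp2 m
    rw [this, sub_nonneg]
    exact cyc_mono C μ ν opt hopt X hX0 hXr hXc hXv k p g hp1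
  obtain ⟨v0, hv0⟩ := potential_exists J w Hwalk
  -- extend the potential to all columns
  set v1 : Fin n → ℝ := fun y => J.inf' hJne (fun x => v0 x + w x y) with hv1
  have hv0le : ∀ x ∈ J, v0 x ≤ v1 x := by
    intro x hx
    rw [hv1]
    apply Finset.le_inf'
    intro x' hx'
    exact hv0 x' hx' x hx
  have key1 : ∀ x ∈ J, ∀ y, v1 y ≤ v1 x + w x y := by
    intro x hx y
    have h1 : v1 y ≤ v0 x + w x y := Finset.inf'_le _ hx
    linarith [hv0le x hx]
  have key2 : ∀ i j, 0 < X i j → ∀ j', v1 j' ≤ v1 j + (C i j' - C i j) := by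
    intro i j hij j'
    have hjJ : j ∈ J := by simp [hJ]; exact ⟨i, hij⟩
    have := key1 j hjJ j'
    have := hwle j j' i hij
    linarith
  -- the dual pair
  set u0 : Fin n → ℝ := fun i => univ.inf' hn' (fun j => C i j - v1 j) with hu0
  have feas0 : ∀ i j, u0 i + v1 j ≤ C i j := by
    intro i j
    have : u0 i ≤ C i j - v1 j := Finset.inf'_le _ (mem_univ j)
    linarith
  have supp : ∀ i j, 0 < X i j → u0 i = C i j - v1 j := by
    intro i j hij
    refine le_antisymm (Finset.inf'_le _ (mem_univ j)) ?_
    apply Finset.le_inf'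
    intro j' _
    have := key2 i j hij j'
    linarith
  set v2 : Fin n → ℝ := fun j => univ.inf' hn' (fun i => C i j - u0 i) with hv2
  have h12 : ∀ j, v1 j ≤ v2 j := by
    intro j
    apply Finset.le_inf'
    intro i _
    linarith [feas0 i j]
  have feas : ∀ i j, u0 i + v2 j ≤ C i j := by
    intro i j
    have : v2 j ≤ C i j - u0 i := Finset.inf'_le _ (mem_univ i)
    linarith
  -- dual value computations
  have pair_sum : ∀ (a b : Fin n → ℝ),
      (∑ i, a i * μ i) + (∑ j, b j * ν j) = ∑ i, ∑ j, (a i + b j) * X i j := by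
    intro a b
    have h1 : ∑ i, a i * μ i = ∑ i, ∑ j, a i * X i j := by
      apply Finset.sum_congr rfl
      intro i _
      rw [← hXr i, Finset.mul_sum]
    have h2 : ∑ j, b j * ν j = ∑ i, ∑ j, b j * X i j := by
      rw [show (∑ i, ∑ j, b j * X i j) = ∑ j, ∑ i, b j * X i j from Finset.sum_comm]
      apply Finset.sum_congr rfl
      intro j _
      rw [← hXc j, Finset.mul_sum]
    rw [h1, h2, ← Finset.sum_add_distrib]
    apply Finset.sum_congr rfl
    intro i _
    rw [← Finset.sum_add_distrib]
    apply Finset.sum_congr rfl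
    intro j _
    ring
  have value1 : (∑ i, u0 i * μ i) + (∑ j, v1 j * ν j) = opt := by
    rw [pair_sum u0 v1, ← hXv]
    apply Finset.sum_congr rfl
    intro i _
    apply Finset.sum_congr rfl
    intro j _
    rcases lt_or_eq_of_le (hX0 i j) with h | h
    · have := supp i j h
      have : u0 i + v1 j = C i j := by linarith
      rw [this]
    · rw [← h]; ring
  have value2 : (∑ i, u0 i * μ i) + (∑ j, v2 j * ν j) = opt := by
    have hle : (∑ i, u0 i * μ i) + (∑ j, v2 j * ν j) ≤ opt := by
      rw [pair_sum u0 v2, ← hXv]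
      apply Finset.sum_le_sum
      intro i _
      apply Finset.sum_le_sum
      intro j _
      exact mul_le_mul_of_nonneg_right (feas i j) (hX0 i j)
    have hge : opt ≤ (∑ i, u0 i * μ i) + (∑ j, v2 j * ν j) := by
      rw [← value1]
      have : ∑ j, v1 j * ν j ≤ ∑ j, v2 j * ν j := by
        apply Finset.sum_le_sum
        intro j _
        exact mul_le_mul_of_nonneg_right (h12 j) (hν0 j)
      linarith
    linarith
  -- oscillation bounds
  have osc_u : ∀ i i', u0 i - u0 i' ≤ Cmax := by
    intro i i'
    obtain ⟨j0, _, hj0⟩ := Finset.exists_mem_eq_inf' hn' (fun j => C i' j - v1 j)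
    have h1 : u0 i' = C i' j0 - v1 j0 := by rw [hu0]; exact hj0
    have h2 : u0 i ≤ C i j0 - v1 j0 := Finset.inf'_le _ (mem_univ j0)
    have := hCle i j0
    have := hC i' j0
    linarith
  have osc_v : ∀ j j', v2 j - v2 j' ≤ Cmax := by
    intro j j'
    obtain ⟨i0, _, hi0⟩ := Finset.exists_mem_eq_inf' hn' (fun i => C i j' - u0 i)
    have h1 : v2 j' = C i0 j' - u0 i0 := by rw [hv2]; exact hi0
    have h2 : v2 j ≤ C i0 j - u0 i0 := Finset.inf'_le _ (mem_univ i0)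
    have := hCle i0 j
    have := hC i0 j'
    linarith
  have low : ∀ i j, -Cmax ≤ u0 i + v2 j := by
    intro i j
    obtain ⟨i0, _, hi0⟩ := Finset.exists_mem_eq_inf' hn' (fun i' => C i' j - u0 i')
    have h1 : v2 j = C i0 j - u0 i0 := by rw [hv2]; exact hi0
    have h2 := osc_u i0 i
    have := hC i0 j
    linarith
  -- the recentering shift
  obtain ⟨imax, _, himax⟩ := Finset.exists_mem_eq_sup' hn' u0
  obtain ⟨jmin, _, hjmin⟩ := Finset.exists_mem_eq_inf' hn' v2
  set Mu : ℝ := univ.sup' hn' u0 with hMu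
  set mv : ℝ := univ.inf' hn' v2 with hmv
  set t : ℝ := max (Mu - Cmax/2) (-mv - Cmax/2) with ht
  refine ⟨fun i => u0 i - t, fun j => v2 j + t, ?_, ?_, ?_, ?_⟩
  · intro i j
    show u0 i - t + (v2 j + t) ≤ C i j
    have := feas i j
    linarith
  · show (∑ i, (u0 i - t) * μ i) + (∑ j, (v2 j + t) * ν j) = opt
    have e1 : ∑ i, (u0 i - t) * μ i = (∑ i, u0 i * μ i) - t := by
      rw [show (∑ i, (u0 i - t) * μ i) = ∑ i, (u0 i * μ i - t * μ i) from
        Finset.sum_congr rfl fun i _ => by ring]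
      rw [Finset.sum_sub_distrib, ← Finset.mul_sum, hμ1, mul_one]
    have e2 : ∑ j, (v2 j + t) * ν j = (∑ j, v2 j * ν j) + t := by
      rw [show (∑ j, (v2 j + t) * ν j) = ∑ j, (v2 j * ν j + t * ν j) from
        Finset.sum_congr rfl fun j _ => by ring]
      rw [Finset.sum_add_distrib, ← Finset.mul_sum, hν1, mul_one]
    rw [e1, e2]
    linarith [value2]
  · intro i
    show |u0 i - t| ≤ Cmax / 2
    rw [abs_le]
    constructor
    · -- -Cmax/2 ≤ u0 i - t
      have hb1 : Mu - Cmax/2 ≤ u0 i + Cmax/2 := by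
        have : Mu - u0 i ≤ Cmax := himax ▸ osc_u imax i
        linarith
      have hb2 : -mv - Cmax/2 ≤ u0 i + Cmax/2 := by
        have : -Cmax ≤ u0 i + v2 jmin := low i jmin
        have : -Cmax ≤ u0 i + mv := by rw [hjmin]; exact this
        linarith
      have := max_le hb1 hb2
      rw [← ht] at this
      linarith
    · -- u0 i - t ≤ Cmax/2
      have h1 : u0 i ≤ Mu := Finset.le_sup' _ (mem_univ i)
      have h2 : Mu - Cmax/2 ≤ t := le_max_left _ _
      linarith
  · intro j
    show |v2 j + t| ≤ Cmax / 2
    rw [abs_le]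
    constructor
    · have h1 : mv ≤ v2 j := Finset.inf'_le _ (mem_univ j)
      have h2 : -mv - Cmax/2 ≤ t := le_max_right _ _
      linarith
    · -- v2 j + t ≤ Cmax/2
      have hb1 : Mu - Cmax/2 ≤ Cmax/2 - v2 j := by
        have : u0 imax + v2 j ≤ Cmax := le_trans (feas imax j) (hCle imax j)
        rw [← himax] at this
        linarith
      have hb2 : -mv - Cmax/2 ≤ Cmax/2 - v2 j := by
        have : v2 j - mv ≤ Cmax := by
          rw [hjmin]; exact osc_v j jmin
        linarith
      have := max_le hb1 hb2
      rw [← ht] at this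
      linarith
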